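/- (Faithfully flat descent for k-linear categories.) Let i : B → A be a k-linear X-functor from a diagonal k-linear category B to a k-linear category A, and assume A is locally flat as a left B-module, that is, each A_{xy} is flat as a left B_x-module. Then the following are equivalent: (1) A_{xx} is faithfully flat as a left B_x-module for every x ∈ X; (2) the adjoint pair (F, G), with F(N)_{xy} = N_x ⊗_{B_x} A_{xy} (descent map σ_{xy}(n ⊗ a) = n ⊗ 1_x ⊗ a) and G(M)_x = {m ∈ M_{xx} | σ_{xx}(m) = m ⊗_{B_x} 1_x}, is a pair of inverse equivalences between D_k(X)_B and Desc_B(A). -/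

import Mathlib

open TensorProduct BigOperators
noncomputable section
namespace Paper
variable (k : Type) [CommRing k]

-- [CORE assumed]
structure KCat (X : Type) where
  M : X → X → Type
  [acg : ∀ x y, AddCommGroup (M x y)]
  [mod : ∀ x y, Module k (M x y)]
  mul : ∀ {x y z : X}, M x y → M y z → M x z
  one : ∀ x : X, M x x
  add_mul : ∀ {x y z : X} (a a' : M x y) (b : M y z), mul (a + a') b = mul a b + mul a' b
  smul_mul : ∀ {x y z : X} (c : k) (a : M x y) (b : M y z), mul (c • a) b = c • mul a b
  mul_add : ∀ {x y z : X} (a : M x y) (b b' : M y z), mul a (b + b') = mul a b + mul a b'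
  mul_smul : ∀ {x y z : X} (c : k) (a : M x y) (b : M y z), mul a (c • b) = c • mul a b
  mul_assoc : ∀ {x y z w : X} (a : M x y) (b : M y z) (c : M z w),
    mul (mul a b) c = mul a (mul b c)
  one_mul : ∀ {x y : X} (a : M x y), mul (one x) a = a
  mul_one : ∀ {x y : X} (a : M x y), mul a (one y) = a
attribute [instance] KCat.acg KCat.mod
variable {k}
def KCat.mulLin {X : Type} (A : KCat k X) (x y z : X) :
    A.M x y →ₗ[k] A.M y z →ₗ[k] A.M x z :=
  LinearMap.mk₂ k A.mul A.add_mul A.smul_mul A.mul_add A.mul_smul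
@[simp] theorem KCat.mulLin_apply {X : Type} (A : KCat k X) (x y z : X)
    (a : A.M x y) (b : A.M y z) : A.mulLin x y z a b = A.mul a b := rfl
variable (k)
def relSub {S M N : Type} [AddCommGroup M] [Module k M] [AddCommGroup N] [Module k N]
    (ρ : M → S → M) (lam : S → N → N) : Submodule k (M ⊗[k] N) :=
  Submodule.span k {t | ∃ m b n, t = ρ m b ⊗ₜ[k] n - m ⊗ₜ[k] lam b n}
abbrev BT {S M N : Type} [AddCommGroup M] [Module k M] [AddCommGroup N] [Module k N]
    (ρ : M → S → M) (lam : S → N → N) : Type :=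
  (M ⊗[k] N) ⧸ relSub k ρ lam
def btmk {S M N : Type} [AddCommGroup M] [Module k M] [AddCommGroup N] [Module k N]
    (ρ : M → S → M) (lam : S → N → N) : M →ₗ[k] N →ₗ[k] BT k ρ lam :=
  (TensorProduct.mk k M N).compr₂ (relSub k ρ lam).mkQ
theorem btmk_rel {S M N : Type} [AddCommGroup M] [Module k M] [AddCommGroup N] [Module k N]
    (ρ : M → S → M) (lam : S → N → N) (m : M) (b : S) (n : N) :
    btmk k ρ lam (ρ m b) n = btmk k ρ lam m (lam b n) := by
  show (relSub k ρ lam).mkQ _ = (relSub k ρ lam).mkQ _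
  rw [Submodule.mkQ_apply, Submodule.mkQ_apply, Submodule.Quotient.eq]
  exact Submodule.subset_span ⟨m, b, n, rfl⟩
def btDesc {S M N P : Type} [AddCommGroup M] [Module k M] [AddCommGroup N] [Module k N]
    [AddCommGroup P] [Module k P]
    (ρ : M → S → M) (lam : S → N → N) (f : M →ₗ[k] N →ₗ[k] P)
    (hf : ∀ m b n, f (ρ m b) n = f m (lam b n)) :
    BT k ρ lam →ₗ[k] P :=
  Submodule.liftQ _ (TensorProduct.lift f) (by
    rw [relSub, Submodule.span_le]
    rintro t ⟨m, b, n, rfl⟩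
    simp [SetLike.mem_coe, LinearMap.mem_ker, map_sub, hf m b n])
@[simp] theorem btDesc_mk {S M N P : Type} [AddCommGroup M] [Module k M] [AddCommGroup N]
    [Module k N] [AddCommGroup P] [Module k P]
    (ρ : M → S → M) (lam : S → N → N) (f : M →ₗ[k] N →ₗ[k] P)
    (hf : ∀ m b n, f (ρ m b) n = f m (lam b n)) (m : M) (n : N) :
    btDesc k ρ lam f hf (btmk k ρ lam m n) = f m n := by
  simp [btDesc, btmk, LinearMap.compr₂_apply, TensorProduct.mk_apply]
-- [END CORE]

/-- A diagonal `k`-linear category: a family of (not necessarily commutative,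
associative, unital) `k`-algebras indexed by `X`. -/
structure DiagAlg (X : Type) where
  C : X → Type
  [acg : ∀ x, AddCommGroup (C x)]
  [mod : ∀ x, Module k (C x)]
  mul : ∀ {x : X}, C x → C x → C x
  one : ∀ x : X, C x
  add_mul : ∀ {x : X} (a a' b : C x), mul (a + a') b = mul a b + mul a' b
  smul_mul : ∀ {x : X} (c : k) (a b : C x), mul (c • a) b = c • mul a b
  mul_add : ∀ {x : X} (a b b' : C x), mul a (b + b') = mul a b + mul a b'
  mul_smul : ∀ {x : X} (c : k) (a b : C x), mul a (c • b) = c • mul a b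
  mul_assoc : ∀ {x : X} (a b c : C x), mul (mul a b) c = mul a (mul b c)
  one_mul : ∀ {x : X} (a : C x), mul (one x) a = a
  mul_one : ∀ {x : X} (a : C x), mul a (one x) = a

attribute [instance] DiagAlg.acg DiagAlg.mod

variable {k}

/-- A `k`-linear `X`-functor from a diagonal category `B` to `A`: a family of
`k`-algebra maps `i x : B x → A x x`. -/
structure XFun {X : Type} (B : DiagAlg k X) (A : KCat k X) where
  i : ∀ x, B.C x →ₗ[k] A.M x x
  i_mul : ∀ x (b b' : B.C x), i x (B.mul b b') = A.mul (i x b) (i x b')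
  i_one : ∀ x, i x (B.one x) = A.one x

/-- A family of right `B_x`-modules (an object of `D_k(X)` with right `B`-action). -/
structure DModData {X : Type} (B : DiagAlg k X) where
  N : X → Type
  [acg : ∀ x, AddCommGroup (N x)]
  [mod : ∀ x, Module k (N x)]
  ract : ∀ {x : X}, N x → B.C x → N x

attribute [instance] DModData.acg DModData.mod

/-- The axioms making `Nd` an object of `D_k(X)_B`. -/
structure IsDMod {X : Type} {B : DiagAlg k X} (Nd : DModData B) : Prop where
  add_ract : ∀ {x : X} (n n' : Nd.N x) (b : B.C x), Nd.ract (n + n') b = Nd.ract n b + Nd.ract n' b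
  ract_add : ∀ {x : X} (n : Nd.N x) (b b' : B.C x), Nd.ract n (b + b') = Nd.ract n b + Nd.ract n b'
  smul_ract : ∀ {x : X} (c : k) (n : Nd.N x) (b : B.C x), Nd.ract (c • n) b = c • Nd.ract n b
  ract_smul : ∀ {x : X} (c : k) (n : Nd.N x) (b : B.C x), Nd.ract n (c • b) = c • Nd.ract n b
  ract_assoc : ∀ {x : X} (n : Nd.N x) (b b' : B.C x),
    Nd.ract (Nd.ract n b) b' = Nd.ract n (B.mul b b')
  ract_one : ∀ {x : X} (n : Nd.N x), Nd.ract n (B.one x) = n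

/-- Morphisms in `D_k(X)_B`. -/
structure IsDModHom {X : Type} {B : DiagAlg k X} (Nd Nd' : DModData B)
    (g : ∀ x, Nd.N x → Nd'.N x) : Prop where
  map_add : ∀ x (n n' : Nd.N x), g x (n + n') = g x n + g x n'
  map_smul : ∀ x (c : k) (n : Nd.N x), g x (c • n) = c • g x n
  map_ract : ∀ x (n : Nd.N x) (b : B.C x), g x (Nd.ract n b) = Nd'.ract (g x n) b

/-- A right module (in `M_k(X)`) over the `k`-linear category `A` (data only). -/
structure RModData {X : Type} (A : KCat k X) where
  M : X → X → Type
  [acg : ∀ x y, AddCommGroup (M x y)]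
  [mod : ∀ x y, Module k (M x y)]
  act : ∀ {x y z : X}, M x y → A.M y z → M x z

attribute [instance] RModData.acg RModData.mod

/-- The axioms of a right `A`-module. -/
structure IsRMod {X : Type} {A : KCat k X} (Md : RModData A) : Prop where
  add_act : ∀ {x y z : X} (m m' : Md.M x y) (a : A.M y z), Md.act (m + m') a = Md.act m a + Md.act m' a
  act_add : ∀ {x y z : X} (m : Md.M x y) (a a' : A.M y z), Md.act m (a + a') = Md.act m a + Md.act m a'
  smul_act : ∀ {x y z : X} (c : k) (m : Md.M x y) (a : A.M y z), Md.act (c • m) a = c • Md.act m a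
  act_smul : ∀ {x y z : X} (c : k) (m : Md.M x y) (a : A.M y z), Md.act m (c • a) = c • Md.act m a
  act_assoc : ∀ {x y z w : X} (m : Md.M x y) (a : A.M y z) (b : A.M z w),
    Md.act (Md.act m a) b = Md.act m (A.mul a b)
  act_one : ∀ {x y : X} (m : Md.M x y), Md.act m (A.one y) = m

/-- Morphisms of right `A`-modules. -/
structure IsRModHom {X : Type} {A : KCat k X} (Md Md' : RModData A)
    (f : ∀ x y, Md.M x y → Md'.M x y) : Prop where
  map_add : ∀ x y (m m' : Md.M x y), f x y (m + m') = f x y m + f x y m'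
  map_smul : ∀ x y (c : k) (m : Md.M x y), f x y (c • m) = c • f x y m
  map_act : ∀ x y z (m : Md.M x y) (a : A.M y z), f x z (Md.act m a) = Md'.act (f x y m) a

section Descent

variable {X : Type} (A : KCat k X) (B : DiagAlg k X) (F : XFun B A)

/-- `M_{xx} ⊗_{B_x} A_{xy}`, for a right `A`-module `M`, where `B` acts via `i = F.i`. -/
abbrev DTc (Md : RModData A) (x y : X) : Type :=
  BT k (fun (m : Md.M x x) (b : B.C x) => Md.act m (F.i x b))
       (fun (b : B.C x) (a : A.M x y) => A.mul (F.i x b) a)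

abbrev dtmk (Md : RModData A) (x y : X) :
    Md.M x x →ₗ[k] A.M x y →ₗ[k] DTc A B F Md x y :=
  btmk k _ _

/-- Right multiplication by `a : A_{yz}` on the second factor of `M_{xx} ⊗_{B_x} A_{xy}`. -/
def dtRmul (Md : RModData A) {x y z : X} (a : A.M y z) :
    DTc A B F Md x y →ₗ[k] DTc A B F Md x z :=
  btDesc k _ _ ((dtmk A B F Md x z).compl₂ ((A.mulLin x y z).flip a)) (by
    intro m b a'
    simp only [LinearMap.compl₂_apply, LinearMap.flip_apply, KCat.mulLin_apply]
    rw [A.mul_assoc]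
    exact btmk_rel k _ _ m b (A.mul a' a))

@[simp] theorem dtRmul_mk (Md : RModData A) {x y z : X} (a : A.M y z)
    (m : Md.M x x) (a' : A.M x y) :
    dtRmul A B F Md a (dtmk A B F Md x y m a') = dtmk A B F Md x z m (A.mul a' a) := by
  simp [dtRmul]

/-- `(M_{xx} ⊗_{B_x} A_{xx}) ⊗_{B_x} A_{xy}`. -/
abbrev DT2c (Md : RModData A) (x y : X) : Type :=
  BT k (fun (t : DTc A B F Md x x) (b : B.C x) => dtRmul A B F Md (F.i x b) t)
       (fun (b : B.C x) (a : A.M x y) => A.mul (F.i x b) a)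

abbrev dt2mk (Md : RModData A) (x y : X) :
    DTc A B F Md x x →ₗ[k] A.M x y →ₗ[k] DT2c A B F Md x y :=
  btmk k _ _

/-- A descent datum: a right `A`-module together with the maps `σ_{xy}`. -/
structure DescData where
  Md : RModData A
  sig : ∀ (x y : X), Md.M x y → DTc A B F Md x y

/-- The axioms of a descent datum.  The conditions `c2` and `c3` are expressed via
(arbitrary) representatives `σ_{xy}(m) = ∑ⱼ m0 j ⊗ m1 j` of the element `σ_{xy}(m)`
of the balanced tensor product. -/
structure IsDesc (D : DescData A B F) : Prop where
  mod : IsRMod D.Md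
  sig_add : ∀ x y (m m' : D.Md.M x y), D.sig x y (m + m') = D.sig x y m + D.sig x y m'
  sig_smul : ∀ x y (c : k) (m : D.Md.M x y), D.sig x y (c • m) = c • D.sig x y m
  c1 : ∀ x y z (m : D.Md.M x y) (a : A.M y z),
    D.sig x z (D.Md.act m a) = dtRmul A B F D.Md a (D.sig x y m)
  c2 : ∀ x y (m : D.Md.M x y) (n : ℕ) (m0 : Fin n → D.Md.M x x) (m1 : Fin n → A.M x y),
    D.sig x y m = ∑ j, dtmk A B F D.Md x y (m0 j) (m1 j) →
    ∑ j, dt2mk A B F D.Md x y (D.sig x x (m0 j)) (m1 j)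
      = ∑ j, dt2mk A B F D.Md x y (dtmk A B F D.Md x x (m0 j) (A.one x)) (m1 j)
  c3 : ∀ x y (m : D.Md.M x y) (n : ℕ) (m0 : Fin n → D.Md.M x x) (m1 : Fin n → A.M x y),
    D.sig x y m = ∑ j, dtmk A B F D.Md x y (m0 j) (m1 j) →
    ∑ j, D.Md.act (m0 j) (m1 j) = m

/-- Morphisms of descent data. -/
structure IsDescHom (D D' : DescData A B F) (f : ∀ x y, D.Md.M x y → D'.Md.M x y) : Prop where
  mod : IsRModHom D.Md D'.Md f
  compat : ∀ x y (m : D.Md.M x y) (n : ℕ) (m0 : Fin n → D.Md.M x x) (m1 : Fin n → A.M x y),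
    D.sig x y m = ∑ j, dtmk A B F D.Md x y (m0 j) (m1 j) →
    D'.sig x y (f x y m) = ∑ j, dtmk A B F D'.Md x y (f x x (m0 j)) (m1 j)

/-- `G(M)_x = { m ∈ M_{xx} | σ_{xx}(m) = m ⊗ 1_x }`. -/
def Gset (D : DescData A B F) (x : X) : Set (D.Md.M x x) :=
  {m | D.sig x x m = dtmk A B F D.Md x x m (A.one x)}

/-- `N_x ⊗_{B_x} A_{xy}` for a diagonal right `B`-module `N`. -/
abbrev FTc (Nd : DModData B) (x y : X) : Type :=
  BT k (fun (n : Nd.N x) (b : B.C x) => Nd.ract n b)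
       (fun (b : B.C x) (a : A.M x y) => A.mul (F.i x b) a)

abbrev ftmk (Nd : DModData B) (x y : X) :
    Nd.N x →ₗ[k] A.M x y →ₗ[k] FTc A B F Nd x y :=
  btmk k _ _

/-- The right `A`-action `(n ⊗ a)·b := n ⊗ ab` on `F(N)`. -/
def ftRmul (Nd : DModData B) {x y z : X} (a : A.M y z) :
    FTc A B F Nd x y →ₗ[k] FTc A B F Nd x z :=
  btDesc k _ _ ((ftmk A B F Nd x z).compl₂ ((A.mulLin x y z).flip a)) (by
    intro m b a'
    simp only [LinearMap.compl₂_apply, LinearMap.flip_apply, KCat.mulLin_apply]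
    rw [A.mul_assoc]
    exact btmk_rel k _ _ m b (A.mul a' a))

@[simp] theorem ftRmul_mk (Nd : DModData B) {x y z : X} (a : A.M y z)
    (n : Nd.N x) (a' : A.M x y) :
    ftRmul A B F Nd a (ftmk A B F Nd x y n a') = ftmk A B F Nd x z n (A.mul a' a) := by
  simp [ftRmul]

/-- The right `A`-module `F(N)`. -/
def FNMod (Nd : DModData B) : RModData A where
  M := FTc A B F Nd
  act := fun {x y z} t a => ftRmul A B F Nd a t

@[simp] theorem FNMod_act (Nd : DModData B) {x y z : X} (t : FTc A B F Nd x y) (a : A.M y z) :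
    (FNMod A B F Nd).act t a = ftRmul A B F Nd a t := rfl

/-- `n ↦ n ⊗ 1_x` as a linear map `N_x → F(N)_{xx}`. -/
def etaLin (Nd : DModData B) (x : X) : Nd.N x →ₗ[k] FTc A B F Nd x x where
  toFun := fun n => ftmk A B F Nd x x n (A.one x)
  map_add' := by intro n n'; simp [map_add]
  map_smul' := by intro c n; simp [map_smul]

@[simp] theorem etaLin_apply (Nd : DModData B) (x : X) (n : Nd.N x) :
    etaLin A B F Nd x n = ftmk A B F Nd x x n (A.one x) := rfl

/-- The descent map `σ_{xy}(n ⊗ a) = (n ⊗ 1_x) ⊗ a` of `F(N)`. -/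
def FNsig (Nd : DModData B) (x y : X) :
    FTc A B F Nd x y →ₗ[k] DTc A B F (FNMod A B F Nd) x y :=
  btDesc k (fun (n : Nd.N x) (b : B.C x) => Nd.ract n b)
    (fun (b : B.C x) (a : A.M x y) => A.mul (F.i x b) a)
    ((dtmk A B F (FNMod A B F Nd) x y).comp (etaLin A B F Nd x)) (by
    intro n b a
    show (dtmk A B F (FNMod A B F Nd) x y) (ftmk A B F Nd x x (Nd.ract n b) (A.one x)) a
      = (dtmk A B F (FNMod A B F Nd) x y) (ftmk A B F Nd x x n (A.one x)) (A.mul (F.i x b) a)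
    rw [btmk_rel k _ _ n b (A.one x), A.mul_one]
    have h2 := btmk_rel k
      (fun (t : (FNMod A B F Nd).M x x) (b : B.C x) => (FNMod A B F Nd).act t (F.i x b))
      (fun (b : B.C x) (a : A.M x y) => A.mul (F.i x b) a)
      (ftmk A B F Nd x x n (A.one x)) b a
    rw [← h2]
    have h3 : (FNMod A B F Nd).act (ftmk A B F Nd x x n (A.one x)) (F.i x b)
        = ftmk A B F Nd x x n (F.i x b) := by
      show ftRmul A B F Nd (F.i x b) (ftmk A B F Nd x x n (A.one x)) = _
      rw [ftRmul_mk, A.one_mul]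
    rw [h3])

@[simp] theorem FNsig_mk (Nd : DModData B) (x y : X) (n : Nd.N x) (a : A.M x y) :
    FNsig A B F Nd x y (ftmk A B F Nd x y n a)
      = dtmk A B F (FNMod A B F Nd) x y (ftmk A B F Nd x x n (A.one x)) a := rfl

/-- The descent datum `F(N)`. -/
def FNDesc (Nd : DModData B) : DescData A B F where
  Md := FNMod A B F Nd
  sig := fun x y t => FNsig A B F Nd x y t

end Descent

section MapLeft

variable {X : Type}

/-- `g ⊗ id` on balanced tensor products. -/
def btMapLeft {S N N' Q : Type} [AddCommGroup N] [Module k N] [AddCommGroup N'] [Module k N']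
    [AddCommGroup Q] [Module k Q]
    (ρ : N → S → N) (ρ' : N' → S → N') (lam : S → Q → Q)
    (g : N →ₗ[k] N') (hg : ∀ n b, g (ρ n b) = ρ' (g n) b) :
    BT k ρ lam →ₗ[k] BT k ρ' lam :=
  btDesc k ρ lam ((btmk k ρ' lam).comp g) (by
    intro n b q
    simp only [LinearMap.comp_apply, hg]
    exact btmk_rel k ρ' lam (g n) b q)

@[simp] theorem btMapLeft_mk {S N N' Q : Type} [AddCommGroup N] [Module k N] [AddCommGroup N']
    [Module k N'] [AddCommGroup Q] [Module k Q]
    (ρ : N → S → N) (ρ' : N' → S → N') (lam : S → Q → Q)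
    (g : N →ₗ[k] N') (hg : ∀ n b, g (ρ n b) = ρ' (g n) b) (n : N) (q : Q) :
    btMapLeft ρ ρ' lam g hg (btmk k ρ lam n q) = btmk k ρ' lam (g n) q := by
  simp [btMapLeft]

end MapLeft

section Descent2

variable {X : Type} (A : KCat k X) (B : DiagAlg k X) (F : XFun B A)

/-- `F(g) = g ⊗ A` for a morphism `g` of diagonal modules. -/
def FNMap (Nd Nd' : DModData B) (g : ∀ x, Nd.N x →ₗ[k] Nd'.N x)
    (hg : ∀ x (n : Nd.N x) (b : B.C x), g x (Nd.ract n b) = Nd'.ract (g x n) b)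
    (x y : X) : FTc A B F Nd x y →ₗ[k] FTc A B F Nd' x y :=
  btMapLeft _ _ _ (g x) (hg x)

/-- `G(M)_x` as a `k`-submodule of `M_{xx}`. -/
def Gsub (D : DescData A B F) (hD : IsDesc A B F D) (x : X) :
    Submodule k (D.Md.M x x) where
  carrier := Gset A B F D x
  add_mem' := by
    intro a b ha hb
    simp only [Gset, Set.mem_setOf_eq] at *
    rw [hD.sig_add, ha, hb]
    simp [map_add]
  zero_mem' := by
    have h0 : D.sig x x (0 : D.Md.M x x) = 0 := by
      have := hD.sig_smul x x (0 : k) 0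
      simpa using this
    simp only [Gset, Set.mem_setOf_eq, h0, map_zero, LinearMap.zero_apply]
  smul_mem' := by
    intro c m hm
    simp only [Gset, Set.mem_setOf_eq] at *
    rw [hD.sig_smul, hm]
    simp [map_smul]

theorem Gsub_closed (D : DescData A B F) (hD : IsDesc A B F D) (x : X)
    (m : D.Md.M x x) (hm : m ∈ Gsub A B F D hD x) (b : B.C x) :
    D.Md.act m (F.i x b) ∈ Gsub A B F D hD x := by
  have hm' : D.sig x x m = dtmk A B F D.Md x x m (A.one x) := hm
  show D.sig x x (D.Md.act m (F.i x b)) = dtmk A B F D.Md x x (D.Md.act m (F.i x b)) (A.one x)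
  rw [hD.c1, hm', dtRmul_mk, A.one_mul]
  rw [btmk_rel k (fun (m : D.Md.M x x) (b : B.C x) => D.Md.act m (F.i x b))
      (fun (b : B.C x) (a : A.M x x) => A.mul (F.i x b) a) m b (A.one x), A.mul_one]

/-- `G(M)` as a diagonal right `B`-module. -/
def GMod (D : DescData A B F) (hD : IsDesc A B F D) : DModData B where
  N := fun x => ↥(Gsub A B F D hD x)
  ract := fun {x} m b => ⟨D.Md.act m.1 (F.i x b), Gsub_closed A B F D hD x m.1 m.2 b⟩

/-- The counit `ε^M : G(M)_x ⊗_{B_x} A_{xy} → M_{xy}`, `m ⊗ a ↦ ma`. -/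
def epsMap (D : DescData A B F) (hD : IsDesc A B F D) (x y : X) :
    FTc A B F (GMod A B F D hD) x y →ₗ[k] D.Md.M x y :=
  btDesc k
    (fun (m : ↥(Gsub A B F D hD x)) (b : B.C x) =>
      (⟨D.Md.act m.1 (F.i x b), Gsub_closed A B F D hD x m.1 m.2 b⟩ : ↥(Gsub A B F D hD x)))
    (fun (b : B.C x) (a : A.M x y) => A.mul (F.i x b) a)
    (LinearMap.mk₂ k (fun (m : ↥(Gsub A B F D hD x)) (a : A.M x y) => D.Md.act m.1 a)
      (by intro m m' a; exact hD.mod.add_act m.1 m'.1 a)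
      (by intro c m a; exact hD.mod.smul_act c m.1 a)
      (by intro m a a'; exact hD.mod.act_add m.1 a a')
      (by intro c m a; exact hD.mod.act_smul c m.1 a))
    (by intro m b a; exact hD.mod.act_assoc m.1 (F.i x b) a)

@[simp] theorem epsMap_mk (D : DescData A B F) (hD : IsDesc A B F D) (x y : X)
    (m : ↥(Gsub A B F D hD x)) (a : A.M x y) :
    epsMap A B F D hD x y (ftmk A B F (GMod A B F D hD) x y m a) = D.Md.act m.1 a := rfl

/-- The unit `η^N_x : N_x → F(N)_{xx}`, `n ↦ n ⊗ 1_x` (its corestriction to `GF(N)` is the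
unit of the adjunction). -/
def etaMap (Nd : DModData B) (x : X) : Nd.N x → FTc A B F Nd x x :=
  fun n => ftmk A B F Nd x x n (A.one x)

end Descent2

section Flat

variable {X : Type} (B : DiagAlg k X)

/-- The axioms of a right module over the `k`-algebra `B_x`. -/
def IsRModOver (x : X) (N : Type) [AddCommGroup N] [Module k N] (ρ : N → B.C x → N) : Prop :=
  (∀ n n' b, ρ (n + n') b = ρ n b + ρ n' b) ∧
  (∀ n b b', ρ n (b + b') = ρ n b + ρ n b') ∧
  (∀ (c : k) n b, ρ (c • n) b = c • ρ n b) ∧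
  (∀ (c : k) n b, ρ n (c • b) = c • ρ n b) ∧
  (∀ n b b', ρ (ρ n b) b' = ρ n (B.mul b b')) ∧
  (∀ n, ρ n (B.one x) = n)

/-- `Q` (with left `B_x`-action `lam`) is flat as a left `B_x`-module:  `- ⊗_{B_x} Q`
preserves injectivity of morphisms of right `B_x`-modules. -/
def LeftFlat (x : X) (Q : Type) [AddCommGroup Q] [Module k Q] (lam : B.C x → Q → Q) : Prop :=
  ∀ (N N' : Type) [AddCommGroup N] [Module k N] [AddCommGroup N'] [Module k N']
    (ρ : N → B.C x → N) (ρ' : N' → B.C x → N'),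
    IsRModOver B x N ρ → IsRModOver B x N' ρ' →
    ∀ (g : N →ₗ[k] N') (hg : ∀ n b, g (ρ n b) = ρ' (g n) b),
      Function.Injective g → Function.Injective (btMapLeft ρ ρ' lam g hg)

/-- `Q` is faithfully flat as a left `B_x`-module: it is flat, and `N ⊗_{B_x} Q = 0`
forces `N = 0`. -/
def LeftFaithfullyFlat (x : X) (Q : Type) [AddCommGroup Q] [Module k Q]
    (lam : B.C x → Q → Q) : Prop :=
  LeftFlat B x Q lam ∧
  ∀ (N : Type) [AddCommGroup N] [Module k N] (ρ : N → B.C x → N), IsRModOver B x N ρ →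
    (∀ t : BT k ρ lam, t = 0) → ∀ n : N, n = 0

end Flat

section Incl

variable {X : Type} (A : KCat k X) (B : DiagAlg k X) (F : XFun B A)

/-- The inclusion `G(M)_x ⊗_{B_x} A_{xy} → M_{xx} ⊗_{B_x} A_{xy}`. -/
def inclMap (D : DescData A B F) (hD : IsDesc A B F D) (x y : X) :
    FTc A B F (GMod A B F D hD) x y →ₗ[k] DTc A B F D.Md x y :=
  btMapLeft (fun (m : (GMod A B F D hD).N x) (b : B.C x) => (GMod A B F D hD).ract m b)
    (fun (m : D.Md.M x x) (b : B.C x) => D.Md.act m (F.i x b))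
    (fun (b : B.C x) (a : A.M x y) => A.mul (F.i x b) a)
    (Gsub A B F D hD x).subtype (fun n b => rfl)

end Incl


section BTHelpers

variable {k : Type} [CommRing k] {S M N P : Type}
  [AddCommGroup M] [Module k M] [AddCommGroup N] [Module k N] [AddCommGroup P] [Module k P]

theorem bt_ext (ρ : M → S → M) (lam : S → N → N) {f g : BT k ρ lam →ₗ[k] P}
    (h : ∀ m n, f (btmk k ρ lam m n) = g (btmk k ρ lam m n)) : f = g :=
  Submodule.linearMap_qext _ (TensorProduct.ext' h)

theorem bt_eq {ρ : M → S → M} {lam : S → N → N} (f g : BT k ρ lam →ₗ[k] P)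
    (h : ∀ m n, f (btmk k ρ lam m n) = g (btmk k ρ lam m n)) (t : BT k ρ lam) :
    f t = g t :=
  DFunLike.congr_fun (bt_ext ρ lam h) t

theorem bt_repr (ρ : M → S → M) (lam : S → N → N) (t : BT k ρ lam) :
    ∃ (n : ℕ) (m0 : Fin n → M) (m1 : Fin n → N),
      t = ∑ j, btmk k ρ lam (m0 j) (m1 j) := by
  obtain ⟨s, rfl⟩ := (relSub k ρ lam).mkQ_surjective t
  induction s using TensorProduct.induction_on with
  | zero => exact ⟨0, ![], ![], by simp⟩
  | tmul m n => exact ⟨1, ![m], ![n], by simp [btmk]⟩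
  | add s1 s2 ih1 ih2 =>
      obtain ⟨n1, a1, b1, h1⟩ := ih1
      obtain ⟨n2, a2, b2, h2⟩ := ih2
      refine ⟨n1 + n2, Fin.append a1 a2, Fin.append b1 b2, ?_⟩
      rw [map_add, h1, h2, Fin.sum_univ_add]
      simp

theorem bt_zero_of_gen {ρ : M → S → M} {lam : S → N → N}
    (h : ∀ m n, btmk k ρ lam m n = 0) (t : BT k ρ lam) : t = 0 := by
  obtain ⟨n, m0, m1, rfl⟩ := bt_repr ρ lam t
  simp [h]

end BTHelpers


section MoreLemmas

variable {k X : Type} [CommRing k] (A : KCat k X) (B : DiagAlg k X) (F : XFun B A)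

theorem ftRmul_add (Nd : DModData B) {x y z : X} (a a' : A.M y z) (t : FTc A B F Nd x y) :
    ftRmul A B F Nd (a + a') t = ftRmul A B F Nd a t + ftRmul A B F Nd a' t :=
  bt_eq (ftRmul A B F Nd (a + a')) (ftRmul A B F Nd a + ftRmul A B F Nd a')
    (by intro n c; simp [A.mul_add]) t

theorem ftRmul_smul (Nd : DModData B) {x y z : X} (c : k) (a : A.M y z) (t : FTc A B F Nd x y) :
    ftRmul A B F Nd (c • a) t = c • ftRmul A B F Nd a t :=
  bt_eq (ftRmul A B F Nd (c • a)) (c • ftRmul A B F Nd a)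
    (by intro n c'; simp [A.mul_smul]) t

theorem ftRmul_comp (Nd : DModData B) {x y z w : X} (a : A.M y z) (a' : A.M z w)
    (t : FTc A B F Nd x y) :
    ftRmul A B F Nd a' (ftRmul A B F Nd a t) = ftRmul A B F Nd (A.mul a a') t :=
  bt_eq ((ftRmul A B F Nd a').comp (ftRmul A B F Nd a)) (ftRmul A B F Nd (A.mul a a'))
    (by intro n c; simp [A.mul_assoc]) t

theorem ftRmul_one (Nd : DModData B) {x y : X} (t : FTc A B F Nd x y) :
    ftRmul A B F Nd (A.one y) t = t :=
  bt_eq (ftRmul A B F Nd (A.one y)) LinearMap.id (by intro n c; simp [A.mul_one]) t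

theorem dtRmul_add (Md : RModData A) {x y z : X} (a a' : A.M y z) (t : DTc A B F Md x y) :
    dtRmul A B F Md (a + a') t = dtRmul A B F Md a t + dtRmul A B F Md a' t :=
  bt_eq (dtRmul A B F Md (a + a')) (dtRmul A B F Md a + dtRmul A B F Md a')
    (by intro n c; simp [A.mul_add]) t

theorem dtRmul_smul (Md : RModData A) {x y z : X} (c : k) (a : A.M y z) (t : DTc A B F Md x y) :
    dtRmul A B F Md (c • a) t = c • dtRmul A B F Md a t :=
  bt_eq (dtRmul A B F Md (c • a)) (c • dtRmul A B F Md a)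
    (by intro n c'; simp [A.mul_smul]) t

theorem dtRmul_comp (Md : RModData A) {x y z w : X} (a : A.M y z) (a' : A.M z w)
    (t : DTc A B F Md x y) :
    dtRmul A B F Md a' (dtRmul A B F Md a t) = dtRmul A B F Md (A.mul a a') t :=
  bt_eq ((dtRmul A B F Md a').comp (dtRmul A B F Md a)) (dtRmul A B F Md (A.mul a a'))
    (by intro n c; simp [A.mul_assoc]) t

theorem dtRmul_one (Md : RModData A) {x y : X} (t : DTc A B F Md x y) :
    dtRmul A B F Md (A.one y) t = t :=
  bt_eq (dtRmul A B F Md (A.one y)) LinearMap.id (by intro n c; simp [A.mul_one]) t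

/-- `M_{xx}` is a right `B_x`-module. -/
theorem isRM_M (Md : RModData A) (hM : IsRMod Md) (x : X) :
    IsRModOver B x (Md.M x x) (fun m b => Md.act m (F.i x b)) := by
  refine ⟨fun n n' b => hM.add_act n n' _, fun n b b' => ?_, fun c n b => hM.smul_act c n _,
    fun c n b => ?_, fun n b b' => ?_, fun n => ?_⟩ <;> dsimp only
  · rw [map_add, hM.act_add]
  · rw [map_smul, hM.act_smul]
  · rw [hM.act_assoc, F.i_mul]
  · rw [F.i_one, hM.act_one]

/-- `M_{xx} ⊗ A_{xx}` is a right `B_x`-module. -/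
theorem isRM_dtc (Md : RModData A) (x : X) :
    IsRModOver B x (DTc A B F Md x x) (fun t b => dtRmul A B F Md (F.i x b) t) := by
  refine ⟨fun n n' b => map_add _ n n', fun n b b' => ?_, fun c n b => map_smul _ c n,
    fun c n b => ?_, fun n b b' => ?_, fun n => ?_⟩ <;> dsimp only
  · rw [map_add, dtRmul_add]
  · rw [map_smul, dtRmul_smul]
  · rw [dtRmul_comp, F.i_mul]
  · rw [F.i_one, dtRmul_one]

/-- `N_x ⊗ A_{xx}` is a right `B_x`-module. -/
theorem isRM_ftc (Nd : DModData B) (x : X) :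
    IsRModOver B x (FTc A B F Nd x x) (fun t b => (FNMod A B F Nd).act t (F.i x b)) := by
  refine ⟨fun n n' b => map_add _ n n', fun n b b' => ?_, fun c n b => map_smul _ c n,
    fun c n b => ?_, fun n b b' => ?_, fun n => ?_⟩
  · show ftRmul A B F Nd _ _ = _
    rw [map_add, ftRmul_add]; rfl
  · show ftRmul A B F Nd _ _ = _
    rw [map_smul, ftRmul_smul]; rfl
  · show ftRmul A B F Nd _ (ftRmul A B F Nd _ _) = ftRmul A B F Nd _ _
    rw [ftRmul_comp, F.i_mul]
  · show ftRmul A B F Nd _ _ = _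
    rw [F.i_one, ftRmul_one]

/-- A family of diagonal module structures gives a right `B_x`-module on each `N_x`. -/
theorem isRM_dmod (Nd : DModData B) (hN : IsDMod Nd) (x : X) :
    IsRModOver B x (Nd.N x) (fun n b => Nd.ract n b) :=
  ⟨fun n n' b => hN.add_ract n n' b, fun n b b' => hN.ract_add n b b',
   fun c n b => hN.smul_ract c n b, fun c n b => hN.ract_smul c n b,
   fun n b b' => hN.ract_assoc n b b', fun n => hN.ract_one n⟩

/-- Restriction of a module structure to a stable submodule. -/
theorem isRM_restrict {x : X} {Nt : Type} [AddCommGroup Nt] [Module k Nt]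
    {ρ : Nt → B.C x → Nt} (hρ : IsRModOver B x Nt ρ) (p : Submodule k Nt)
    (hp : ∀ m (_ : m ∈ p) b, ρ m b ∈ p) :
    IsRModOver B x ↥p (fun m b => ⟨ρ m.1 b, hp m.1 m.2 b⟩) := by
  obtain ⟨h1, h2, h3, h4, h5, h6⟩ := hρ
  exact ⟨fun n n' b => Subtype.ext (h1 n.1 n'.1 b), fun n b b' => Subtype.ext (h2 n.1 b b'),
    fun c n b => Subtype.ext (h3 c n.1 b), fun c n b => Subtype.ext (h4 c n.1 b),
    fun n b b' => Subtype.ext (h5 n.1 b b'), fun n => Subtype.ext (h6 n.1)⟩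

/-- Quotient of a module structure by a stable submodule. -/
theorem isRM_quot {x : X} {Nt : Type} [AddCommGroup Nt] [Module k Nt]
    {ρ : Nt → B.C x → Nt} (hρ : IsRModOver B x Nt ρ)
    (rlin : B.C x → Nt →ₗ[k] Nt) (hr : ∀ b m, rlin b m = ρ m b)
    (p : Submodule k Nt) (hp : ∀ b, p ≤ p.comap (rlin b)) :
    IsRModOver B x (Nt ⧸ p) (fun q b => Submodule.mapQ p p (rlin b) (hp b) q) := by
  obtain ⟨h1, h2, h3, h4, h5, h6⟩ := hρ
  refine ⟨fun n n' b => ?_, fun n b b' => ?_, fun c n b => ?_, fun c n b => ?_,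
    fun n b b' => ?_, fun n => ?_⟩ <;>
  [ (obtain ⟨m, rfl⟩ := Submodule.Quotient.mk_surjective p n;
     obtain ⟨m', rfl⟩ := Submodule.Quotient.mk_surjective p n');
    obtain ⟨m, rfl⟩ := Submodule.Quotient.mk_surjective p n;
    obtain ⟨m, rfl⟩ := Submodule.Quotient.mk_surjective p n;
    obtain ⟨m, rfl⟩ := Submodule.Quotient.mk_surjective p n;
    obtain ⟨m, rfl⟩ := Submodule.Quotient.mk_surjective p n;
    obtain ⟨m, rfl⟩ := Submodule.Quotient.mk_surjective p n] <;>
  simp only [← Submodule.Quotient.mk_add, ← Submodule.Quotient.mk_smul, Submodule.mapQ_apply,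
    map_add, map_smul, hr]
  · rw [h1]
  · rw [h2, Submodule.Quotient.mk_add]
  · rw [h3]
  · rw [h4, Submodule.Quotient.mk_smul]
  · rw [h5]
  · rw [h6]

end MoreLemmas


section Counit

variable {k X : Type} [CommRing k] (A : KCat k X) (B : DiagAlg k X) (F : XFun B A)
variable (D : DescData A B F) (hD : IsDesc A B F D)

/-- `σ_{xy}` as a linear map. -/
def sigLin (x y : X) : D.Md.M x y →ₗ[k] DTc A B F D.Md x y where
  toFun := D.sig x y
  map_add' := hD.sig_add x y
  map_smul' := hD.sig_smul x y

@[simp] theorem sigLin_apply (x y : X) (m : D.Md.M x y) :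
    sigLin A B F D hD x y m = D.sig x y m := rfl

/-- Multiplication `M_{xx} ⊗ A_{xy} → M_{xy}`. -/
def multLin (x y : X) : DTc A B F D.Md x y →ₗ[k] D.Md.M x y :=
  btDesc k _ _
    (LinearMap.mk₂ k (fun (m : D.Md.M x x) (a : A.M x y) => D.Md.act m a)
      (fun m m' a => hD.mod.add_act m m' a)
      (fun c m a => hD.mod.smul_act c m a)
      (fun m a a' => hD.mod.act_add m a a')
      (fun c m a => hD.mod.act_smul c m a))
    (fun m b a => hD.mod.act_assoc m (F.i x b) a)

@[simp] theorem multLin_mk (x y : X) (m : D.Md.M x x) (a : A.M x y) :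
    multLin A B F D hD x y (dtmk A B F D.Md x y m a) = D.Md.act m a :=
  btDesc_mk k _ _ _ _ m a

/-- Right action of `b` on `M_{xx}` as a linear map. -/
def actLin (x : X) (b : B.C x) : D.Md.M x x →ₗ[k] D.Md.M x x where
  toFun m := D.Md.act m (F.i x b)
  map_add' m m' := hD.mod.add_act m m' _
  map_smul' c m := hD.mod.smul_act c m _

/-- `δ = σ_{xx} - (- ⊗ 1_x)`. -/
def deltaLin (x : X) : D.Md.M x x →ₗ[k] DTc A B F D.Md x x :=
  sigLin A B F D hD x x - (dtmk A B F D.Md x x).flip (A.one x)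

theorem deltaLin_apply (x : X) (m : D.Md.M x x) :
    deltaLin A B F D hD x m = D.sig x x m - dtmk A B F D.Md x x m (A.one x) := rfl

theorem mem_Gsub_iff (x : X) (m : D.Md.M x x) :
    m ∈ Gsub A B F D hD x ↔ deltaLin A B F D hD x m = 0 := by
  rw [deltaLin_apply, sub_eq_zero]
  exact Iff.rfl

theorem deltaLin_equiv (x : X) (m : D.Md.M x x) (b : B.C x) :
    deltaLin A B F D hD x (D.Md.act m (F.i x b))
      = dtRmul A B F D.Md (F.i x b) (deltaLin A B F D hD x m) := by
  rw [deltaLin_apply, deltaLin_apply, map_sub, hD.c1, dtRmul_mk, A.one_mul]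
  congr 1
  rw [btmk_rel k (fun (m : D.Md.M x x) (b : B.C x) => D.Md.act m (F.i x b))
      (fun (b : B.C x) (a : A.M x x) => A.mul (F.i x b) a) m b (A.one x), A.mul_one]

/-- `δ` factoring through the quotient by `G(M)_x`. -/
def deltaBar (x : X) : (D.Md.M x x ⧸ Gsub A B F D hD x) →ₗ[k] DTc A B F D.Md x x :=
  Submodule.liftQ _ (deltaLin A B F D hD x)
    (fun m hm => (mem_Gsub_iff A B F D hD x m).mp hm)

theorem deltaBar_mk (x : X) (m : D.Md.M x x) :
    deltaBar A B F D hD x (Submodule.Quotient.mk m) = deltaLin A B F D hD x m := rfl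

theorem deltaBar_inj (x : X) : Function.Injective (deltaBar A B F D hD x) := by
  intro q q' hqq
  obtain ⟨m, rfl⟩ := Submodule.Quotient.mk_surjective _ q
  obtain ⟨m', rfl⟩ := Submodule.Quotient.mk_surjective _ q'
  rw [Submodule.Quotient.eq]
  have : deltaLin A B F D hD x m = deltaLin A B F D hD x m' := hqq
  rw [mem_Gsub_iff, map_sub, this, sub_self]

theorem Gsub_stable (x : X) (b : B.C x) :
    Gsub A B F D hD x ≤ (Gsub A B F D hD x).comap (actLin A B F D hD x b) :=
  fun m hm => Gsub_closed A B F D hD x m hm b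

/-- The quotient action on `M_{xx}/G(M)_x`. -/
abbrev rhoQ (x : X) : (D.Md.M x x ⧸ Gsub A B F D hD x) → B.C x →
    (D.Md.M x x ⧸ Gsub A B F D hD x) :=
  fun q b => Submodule.mapQ _ _ (actLin A B F D hD x b) (Gsub_stable A B F D hD x b) q

theorem rhoQ_mk (x : X) (m : D.Md.M x x) (b : B.C x) :
    rhoQ A B F D hD x (Submodule.Quotient.mk m) b
      = Submodule.Quotient.mk (D.Md.act m (F.i x b)) :=
  Submodule.mapQ_apply _ _ _ m

theorem isRM_Q (x : X) :
    IsRModOver B x (D.Md.M x x ⧸ Gsub A B F D hD x) (rhoQ A B F D hD x) :=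
  isRM_quot B (isRM_M A B F D.Md hD.mod x) (actLin A B F D hD x) (fun _ _ => rfl) _
    (Gsub_stable A B F D hD x)

theorem isRM_gmod (x : X) :
    IsRModOver B x ((GMod A B F D hD).N x) (fun m b => (GMod A B F D hD).ract m b) :=
  isRM_restrict B (isRM_M A B F D.Md hD.mod x) (Gsub A B F D hD x)
    (fun m hm b => Gsub_closed A B F D hD x m hm b)

theorem deltaBar_equiv (x : X) (q : D.Md.M x x ⧸ Gsub A B F D hD x) (b : B.C x) :
    deltaBar A B F D hD x (rhoQ A B F D hD x q b)
      = dtRmul A B F D.Md (F.i x b) (deltaBar A B F D hD x q) := by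
  obtain ⟨m, rfl⟩ := Submodule.Quotient.mk_surjective _ q
  have h1 : rhoQ A B F D hD x (Submodule.Quotient.mk m) b
      = Submodule.Quotient.mk (actLin A B F D hD x b m) := Submodule.mapQ_apply _ _ _ m
  rw [h1, deltaBar_mk, deltaBar_mk]
  exact deltaLin_equiv A B F D hD x m b

theorem inclMap_mk (x y : X) (g : (GMod A B F D hD).N x) (a : A.M x y) :
    inclMap A B F D hD x y (ftmk A B F (GMod A B F D hD) x y g a)
      = dtmk A B F D.Md x y g.1 a :=
  btMapLeft_mk _ _ _ _ _ g a

theorem sig_eps (x y : X) (s : FTc A B F (GMod A B F D hD) x y) :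
    sigLin A B F D hD x y (epsMap A B F D hD x y s) = inclMap A B F D hD x y s := by
  refine bt_eq ((sigLin A B F D hD x y).comp (epsMap A B F D hD x y))
    (inclMap A B F D hD x y) ?_ s
  intro g a
  show D.sig x y (D.Md.act g.1 a)
    = inclMap A B F D hD x y (ftmk A B F (GMod A B F D hD) x y g a)
  rw [hD.c1, g.2, dtRmul_mk, A.one_mul, inclMap_mk]

theorem eps_eq_mult_incl (x y : X) (s : FTc A B F (GMod A B F D hD) x y) :
    epsMap A B F D hD x y s = multLin A B F D hD x y (inclMap A B F D hD x y s) := by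
  refine bt_eq (epsMap A B F D hD x y)
    ((multLin A B F D hD x y).comp (inclMap A B F D hD x y)) ?_ s
  intro g a
  show D.Md.act g.1 a
    = multLin A B F D hD x y (inclMap A B F D hD x y (ftmk A B F (GMod A B F D hD) x y g a))
  rw [inclMap_mk, multLin_mk]

theorem counit_bij
    (hlocflat : ∀ x y : X,
      LeftFlat B x (A.M x y) (fun (b : B.C x) (a : A.M x y) => A.mul (F.i x b) a))
    (x y : X) : Function.Bijective (epsMap A B F D hD x y) := by
  have hincl_inj : Function.Injective (inclMap A B F D hD x y) :=
    hlocflat x y _ _ _ _ (isRM_gmod A B F D hD x) (isRM_M A B F D.Md hD.mod x)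
      (Gsub A B F D hD x).subtype (fun n b => rfl) Subtype.coe_injective
  constructor
  · intro s s' hss
    apply hincl_inj
    rw [← sig_eps, ← sig_eps, hss]
  · intro m
    obtain ⟨n, m0, m1, hrep⟩ := bt_repr _ _ (D.sig x y m)
    -- the map δ ⊗ id
    have hdeq : ∀ (mm : D.Md.M x x) (b : B.C x),
        deltaLin A B F D hD x (D.Md.act mm (F.i x b))
          = dtRmul A B F D.Md (F.i x b) (deltaLin A B F D hD x mm) :=
      deltaLin_equiv A B F D hD x
    set Dmap := btMapLeft (fun (mm : D.Md.M x x) (b : B.C x) => D.Md.act mm (F.i x b))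
      (fun (t : DTc A B F D.Md x x) (b : B.C x) => dtRmul A B F D.Md (F.i x b) t)
      (fun (b : B.C x) (a : A.M x y) => A.mul (F.i x b) a)
      (deltaLin A B F D hD x) hdeq with hDmap
    have hD0 : Dmap (D.sig x y m) = 0 := by
      rw [hrep, map_sum]
      have : ∀ j, Dmap (dtmk A B F D.Md x y (m0 j) (m1 j))
          = dt2mk A B F D.Md x y (D.sig x x (m0 j)) (m1 j)
            - dt2mk A B F D.Md x y (dtmk A B F D.Md x x (m0 j) (A.one x)) (m1 j) := by
        intro j
        rw [hDmap, btMapLeft_mk, deltaLin_apply, map_sub, LinearMap.sub_apply]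
      rw [Finset.sum_congr rfl (fun j _ => this j), Finset.sum_sub_distrib,
        hD.c2 x y m n m0 m1 hrep, sub_self]
    -- π⊗id and the factorization
    set piMap := btMapLeft (fun (mm : D.Md.M x x) (b : B.C x) => D.Md.act mm (F.i x b))
      (rhoQ A B F D hD x)
      (fun (b : B.C x) (a : A.M x y) => A.mul (F.i x b) a)
      (Gsub A B F D hD x).mkQ
      (fun mm b => by
        rw [Submodule.mkQ_apply, Submodule.mkQ_apply]
        exact (rhoQ_mk A B F D hD x mm b).symm) with hpiMap
    set DbarMap := btMapLeft (rhoQ A B F D hD x)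
      (fun (t : DTc A B F D.Md x x) (b : B.C x) => dtRmul A B F D.Md (F.i x b) t)
      (fun (b : B.C x) (a : A.M x y) => A.mul (F.i x b) a)
      (deltaBar A B F D hD x) (deltaBar_equiv A B F D hD x) with hDbarMap
    have hfact : ∀ t, Dmap t = DbarMap (piMap t) := by
      intro t
      refine bt_eq Dmap (DbarMap.comp piMap) ?_ t
      intro mm a
      rw [hDmap, hpiMap, hDbarMap, btMapLeft_mk, LinearMap.comp_apply, btMapLeft_mk,
        btMapLeft_mk, Submodule.mkQ_apply, deltaBar_mk]
    have hDbar_inj : Function.Injective DbarMap := by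
      rw [hDbarMap]
      exact hlocflat x y _ _ _ _ (isRM_Q A B F D hD x) (isRM_dtc A B F D.Md x)
        (deltaBar A B F D hD x) (deltaBar_equiv A B F D hD x) (deltaBar_inj A B F D hD x)
    have hpi0 : piMap (D.sig x y m) = 0 := by
      apply hDbar_inj
      rw [← hfact, hD0, map_zero]
    -- ker(π ⊗ id) ⊆ range incl
    set R := LinearMap.range (inclMap A B F D hD x y) with hR
    have hmemR : ∀ (g : D.Md.M x x) (hg : g ∈ Gsub A B F D hD x) (a : A.M x y),
        dtmk A B F D.Md x y g a ∈ R := by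
      intro g hg a
      exact ⟨ftmk A B F (GMod A B F D hD) x y ⟨g, hg⟩ a, inclMap_mk A B F D hD x y ⟨g, hg⟩ a⟩
    have hphi : Gsub A B F D hD x ≤
        LinearMap.ker ((dtmk A B F D.Md x y).compr₂ R.mkQ) := by
      intro g hg
      rw [LinearMap.mem_ker]
      ext a
      rw [LinearMap.compr₂_apply, Submodule.mkQ_apply, LinearMap.zero_apply,
        Submodule.Quotient.mk_eq_zero]
      exact hmemR g hg a
    set psi := btDesc k (rhoQ A B F D hD x)
      (fun (b : B.C x) (a : A.M x y) => A.mul (F.i x b) a)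
      (Submodule.liftQ _ ((dtmk A B F D.Md x y).compr₂ R.mkQ) hphi)
      (by
        intro q b a
        obtain ⟨mm, rfl⟩ := Submodule.Quotient.mk_surjective _ q
        have h1 : rhoQ A B F D hD x (Submodule.Quotient.mk mm) b
            = Submodule.Quotient.mk (actLin A B F D hD x b mm) :=
          Submodule.mapQ_apply _ _ _ mm
        rw [h1, Submodule.liftQ_apply, Submodule.liftQ_apply,
          LinearMap.compr₂_apply, LinearMap.compr₂_apply]
        show R.mkQ (dtmk A B F D.Md x y (D.Md.act mm (F.i x b)) a) = _
        rw [btmk_rel k (fun (m : D.Md.M x x) (b : B.C x) => D.Md.act m (F.i x b))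
          (fun (b : B.C x) (a : A.M x y) => A.mul (F.i x b) a) mm b a]) with hpsi
    have hps : ∀ t, psi (piMap t) = R.mkQ t := by
      intro t
      refine bt_eq (psi.comp piMap) R.mkQ ?_ t
      intro mm a
      rw [LinearMap.comp_apply, hpiMap, btMapLeft_mk, hpsi, btDesc_mk,
        Submodule.mkQ_apply, Submodule.liftQ_apply, LinearMap.compr₂_apply]
    have hmem : D.sig x y m ∈ R := by
      rw [← Submodule.Quotient.mk_eq_zero, ← Submodule.mkQ_apply, ← hps, hpi0, map_zero]
    obtain ⟨s, hs⟩ := hmem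
    refine ⟨s, ?_⟩
    rw [eps_eq_mult_incl]
    show multLin A B F D hD x y (inclMap A B F D hD x y s) = m
    rw [hs, hrep, map_sum]
    have : ∀ j, multLin A B F D hD x y (dtmk A B F D.Md x y (m0 j) (m1 j))
        = D.Md.act (m0 j) (m1 j) := fun j => multLin_mk A B F D hD x y _ _
    rw [Finset.sum_congr rfl (fun j _ => this j)]
    exact hD.c3 x y m n m0 m1 hrep

end Counit


section Unit

variable {k X : Type} [CommRing k] (A : KCat k X) (B : DiagAlg k X) (F : XFun B A)
variable (Nd : DModData B) (hN : IsDMod Nd) (x : X)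

/-- `- ⊗ 1_x` on `N_x ⊗ A_{xx}`. -/
def oneTensN : FTc A B F Nd x x →ₗ[k] DTc A B F (FNMod A B F Nd) x x :=
  (dtmk A B F (FNMod A B F Nd) x x).flip (A.one x)

/-- `d = σ^{F(N)}_{xx} - (- ⊗ 1_x)` on `N_x ⊗ A_{xx}`. -/
def dlinN : FTc A B F Nd x x →ₗ[k] DTc A B F (FNMod A B F Nd) x x :=
  FNsig A B F Nd x x - oneTensN A B F Nd x

theorem dlinN_apply (t : FTc A B F Nd x x) :
    dlinN A B F Nd x t = FNsig A B F Nd x x t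
      - dtmk A B F (FNMod A B F Nd) x x t (A.one x) := rfl

theorem etaLin_equiv (n : Nd.N x) (b : B.C x) :
    etaLin A B F Nd x (Nd.ract n b) = (FNMod A B F Nd).act (etaLin A B F Nd x n) (F.i x b) := by
  rw [etaLin_apply, etaLin_apply, FNMod_act, ftRmul_mk, A.one_mul,
    btmk_rel k (fun (n : Nd.N x) (b : B.C x) => Nd.ract n b)
      (fun (b : B.C x) (a : A.M x x) => A.mul (F.i x b) a) n b (A.one x), A.mul_one]

theorem dlinN_eta (n : Nd.N x) : dlinN A B F Nd x (etaLin A B F Nd x n) = 0 := by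
  rw [dlinN_apply, etaLin_apply, FNsig_mk, sub_self]

theorem dlinN_equiv (t : FTc A B F Nd x x) (b : B.C x) :
    dlinN A B F Nd x ((FNMod A B F Nd).act t (F.i x b))
      = dtRmul A B F (FNMod A B F Nd) (F.i x b) (dlinN A B F Nd x t) := by
  refine bt_eq ((dlinN A B F Nd x).comp (ftRmul A B F Nd (F.i x b)))
    ((dtRmul A B F (FNMod A B F Nd) (F.i x b)).comp (dlinN A B F Nd x)) ?_ t
  intro n c
  rw [LinearMap.comp_apply, LinearMap.comp_apply, ftRmul_mk, dlinN_apply, dlinN_apply,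
    FNsig_mk, FNsig_mk, map_sub,
    dtRmul_mk A B F (FNMod A B F Nd) (F.i x b) (ftmk A B F Nd x x n (A.one x)) c,
    dtRmul_mk A B F (FNMod A B F Nd) (F.i x b) (ftmk A B F Nd x x n c) (A.one x)]
  congr 1
  have h1 : dtmk A B F (FNMod A B F Nd) x x
      ((FNMod A B F Nd).act (ftmk A B F Nd x x n c) (F.i x b)) (A.one x)
      = dtmk A B F (FNMod A B F Nd) x x (ftmk A B F Nd x x n c) (A.mul (F.i x b) (A.one x)) :=
    btmk_rel k (fun (t : FTc A B F Nd x x) (b : B.C x) => (FNMod A B F Nd).act t (F.i x b))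
      (fun (b : B.C x) (a : A.M x x) => A.mul (F.i x b) a) (ftmk A B F Nd x x n c) b (A.one x)
  rw [FNMod_act, ftRmul_mk] at h1
  rw [h1, A.mul_one, A.one_mul]

/-- Multiplication of the last two tensor factors `(N ⊗ A) ⊗ A → N ⊗ A`. -/
def h1map : DTc A B F (FNMod A B F Nd) x x →ₗ[k] FTc A B F Nd x x :=
  btDesc k (fun (t : FTc A B F Nd x x) (b : B.C x) => (FNMod A B F Nd).act t (F.i x b))
    (fun (b : B.C x) (a : A.M x x) => A.mul (F.i x b) a)
    (LinearMap.mk₂ k (fun (t : FTc A B F Nd x x) (a : A.M x x) => ftRmul A B F Nd a t)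
      (fun t t' a => map_add _ t t')
      (fun c t a => map_smul _ c t)
      (fun t a a' => ftRmul_add A B F Nd a a' t)
      (fun c t a => ftRmul_smul A B F Nd c a t))
    (fun t b a => by
      show ftRmul A B F Nd a ((FNMod A B F Nd).act t (F.i x b)) = ftRmul A B F Nd _ t
      rw [FNMod_act, ftRmul_comp])

@[simp] theorem h1map_mk (t : FTc A B F Nd x x) (a : A.M x x) :
    h1map A B F Nd x (dtmk A B F (FNMod A B F Nd) x x t a) = ftRmul A B F Nd a t :=
  btDesc_mk k _ _ _ _ t a

/-- Multiplication of the last two tensor factors `(N ⊗ A ⊗ A) ⊗ A → N ⊗ A ⊗ A`. -/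
def h2map : DT2c A B F (FNMod A B F Nd) x x →ₗ[k] DTc A B F (FNMod A B F Nd) x x :=
  btDesc k (fun (u : DTc A B F (FNMod A B F Nd) x x) (b : B.C x) =>
      dtRmul A B F (FNMod A B F Nd) (F.i x b) u)
    (fun (b : B.C x) (a : A.M x x) => A.mul (F.i x b) a)
    (LinearMap.mk₂ k (fun (u : DTc A B F (FNMod A B F Nd) x x) (a : A.M x x) =>
        dtRmul A B F (FNMod A B F Nd) a u)
      (fun u u' a => map_add _ u u')
      (fun c u a => map_smul _ c u)
      (fun u a a' => dtRmul_add A B F (FNMod A B F Nd) a a' u)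
      (fun c u a => dtRmul_smul A B F (FNMod A B F Nd) c a u))
    (fun u b a => dtRmul_comp A B F (FNMod A B F Nd) (F.i x b) a u)

@[simp] theorem h2map_mk (u : DTc A B F (FNMod A B F Nd) x x) (a : A.M x x) :
    h2map A B F Nd x (dt2mk A B F (FNMod A B F Nd) x x u a)
      = dtRmul A B F (FNMod A B F Nd) a u :=
  btDesc_mk k _ _ _ _ u a

theorem homotopy_inner (t : FTc A B F Nd x x) (a : A.M x x) :
    dtmk A B F (FNMod A B F Nd) x x t a
      = FNsig A B F Nd x x (ftRmul A B F Nd a t)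
        - dtRmul A B F (FNMod A B F Nd) a (dlinN A B F Nd x t) := by
  refine bt_eq ((dtmk A B F (FNMod A B F Nd) x x).flip a)
    ((FNsig A B F Nd x x).comp (ftRmul A B F Nd a)
      - (dtRmul A B F (FNMod A B F Nd) a).comp (dlinN A B F Nd x)) ?_ t
  intro n c
  show dtmk A B F (FNMod A B F Nd) x x (ftmk A B F Nd x x n c) a
    = FNsig A B F Nd x x (ftRmul A B F Nd a (ftmk A B F Nd x x n c))
      - dtRmul A B F (FNMod A B F Nd) a (dlinN A B F Nd x (ftmk A B F Nd x x n c))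
  rw [ftRmul_mk, FNsig_mk, dlinN_apply, FNsig_mk, map_sub,
    dtRmul_mk A B F (FNMod A B F Nd) a (ftmk A B F Nd x x n (A.one x)) c,
    dtRmul_mk A B F (FNMod A B F Nd) a (ftmk A B F Nd x x n c) (A.one x), A.one_mul,
    sub_sub_cancel]

theorem homotopy (v : DTc A B F (FNMod A B F Nd) x x) :
    v = FNsig A B F Nd x x (h1map A B F Nd x v)
      - h2map A B F Nd x
          (btMapLeft (fun (t : FTc A B F Nd x x) (b : B.C x) => (FNMod A B F Nd).act t (F.i x b))
            (fun (u : DTc A B F (FNMod A B F Nd) x x) (b : B.C x) =>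
              dtRmul A B F (FNMod A B F Nd) (F.i x b) u)
            (fun (b : B.C x) (a : A.M x x) => A.mul (F.i x b) a)
            (dlinN A B F Nd x) (dlinN_equiv A B F Nd x) v) := by
  refine bt_eq LinearMap.id
    ((FNsig A B F Nd x x).comp (h1map A B F Nd x)
      - ((h2map A B F Nd x).comp (btMapLeft _ _ _ (dlinN A B F Nd x) (dlinN_equiv A B F Nd x)) :
          DTc A B F (FNMod A B F Nd) x x →ₗ[k] DTc A B F (FNMod A B F Nd) x x))
    ?_ v
  intro t a
  rw [LinearMap.id_apply, LinearMap.sub_apply, LinearMap.comp_apply, LinearMap.comp_apply]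
  exact homotopy_inner A B F Nd x t a

theorem FNsig_eq_eta (w : FTc A B F Nd x x) :
    FNsig A B F Nd x x w
      = btMapLeft (fun (n : Nd.N x) (b : B.C x) => Nd.ract n b)
          (fun (t : FTc A B F Nd x x) (b : B.C x) => (FNMod A B F Nd).act t (F.i x b))
          (fun (b : B.C x) (a : A.M x x) => A.mul (F.i x b) a)
          (etaLin A B F Nd x) (etaLin_equiv A B F Nd x) w := by
  refine bt_eq (FNsig A B F Nd x x) (btMapLeft _ _ _ _ (etaLin_equiv A B F Nd x)) ?_ w
  intro n c
  rw [FNsig_mk]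
  rfl

end Unit


section Unit2

variable {k X : Type} [CommRing k] (A : KCat k X) (B : DiagAlg k X) (F : XFun B A)
variable (Nd : DModData B) (x : X)

theorem Kd_stab (u : FTc A B F Nd x x) (hu : u ∈ LinearMap.ker (dlinN A B F Nd x)) (b : B.C x) :
    (FNMod A B F Nd).act u (F.i x b) ∈ LinearMap.ker (dlinN A B F Nd x) := by
  have h1 := dlinN_equiv A B F Nd x u b
  have h2 : dlinN A B F Nd x u = 0 := hu
  rw [h2, map_zero] at h1
  exact (LinearMap.mem_ker (f := dlinN A B F Nd x)).mpr h1

/-- The induced `B_x`-action on `ker d`. -/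
def rhoK (u : ↥(LinearMap.ker (dlinN A B F Nd x))) (b : B.C x) :
    ↥(LinearMap.ker (dlinN A B F Nd x)) :=
  ⟨(FNMod A B F Nd).act u.1 (F.i x b), Kd_stab A B F Nd x u.1 u.2 b⟩

/-- `range η` inside `ker d`. -/
def RcN : Submodule k ↥(LinearMap.ker (dlinN A B F Nd x)) :=
  (LinearMap.range (etaLin A B F Nd x)).comap (LinearMap.ker (dlinN A B F Nd x)).subtype

def rKlin (b : B.C x) :
    ↥(LinearMap.ker (dlinN A B F Nd x)) →ₗ[k] ↥(LinearMap.ker (dlinN A B F Nd x)) :=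
  (ftRmul A B F Nd (F.i x b)).restrict (fun u hu => Kd_stab A B F Nd x u hu b)

theorem Rc_stab (b : B.C x) : RcN A B F Nd x ≤ (RcN A B F Nd x).comap (rKlin A B F Nd x b) := by
  intro u hu
  obtain ⟨nn, hnn⟩ := hu
  refine Submodule.mem_comap.mpr ⟨Nd.ract nn b, ?_⟩
  show etaLin A B F Nd x (Nd.ract nn b) = (rKlin A B F Nd x b u).1
  rw [etaLin_equiv]
  show (FNMod A B F Nd).act (etaLin A B F Nd x nn) (F.i x b) = _
  rw [hnn]
  rfl

/-- The action on the homology `ker d / range η`. -/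
def rhoH (h : ↥(LinearMap.ker (dlinN A B F Nd x)) ⧸ RcN A B F Nd x) (b : B.C x) :
    ↥(LinearMap.ker (dlinN A B F Nd x)) ⧸ RcN A B F Nd x :=
  Submodule.mapQ _ _ (rKlin A B F Nd x b) (Rc_stab A B F Nd x b) h

/-- `η` corestricted to `ker d`. -/
def etaK : Nd.N x →ₗ[k] ↥(LinearMap.ker (dlinN A B F Nd x)) :=
  LinearMap.codRestrict _ (etaLin A B F Nd x)
    (fun n => LinearMap.mem_ker.mpr (dlinN_eta A B F Nd x n))

theorem etaK_equiv (n : Nd.N x) (b : B.C x) :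
    etaK A B F Nd x (Nd.ract n b) = rhoK A B F Nd x (etaK A B F Nd x n) b :=
  Subtype.ext (etaLin_equiv A B F Nd x n b)

theorem rhoK_equiv (u : ↥(LinearMap.ker (dlinN A B F Nd x))) (b : B.C x) :
    (RcN A B F Nd x).mkQ (rhoK A B F Nd x u b) = rhoH A B F Nd x ((RcN A B F Nd x).mkQ u) b := by
  show Submodule.Quotient.mk (rhoK A B F Nd x u b)
    = Submodule.mapQ _ _ (rKlin A B F Nd x b) (Rc_stab A B F Nd x b) (Submodule.Quotient.mk u)
  rw [Submodule.mapQ_apply]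
  rfl

theorem Dlt_mk (t : FTc A B F Nd x x) (a : A.M x x) :
    btMapLeft (fun (t : FTc A B F Nd x x) (b : B.C x) => (FNMod A B F Nd).act t (F.i x b))
      (fun (u : DTc A B F (FNMod A B F Nd) x x) (b : B.C x) =>
        dtRmul A B F (FNMod A B F Nd) (F.i x b) u)
      (fun (b : B.C x) (a : A.M x x) => A.mul (F.i x b) a)
      (dlinN A B F Nd x) (dlinN_equiv A B F Nd x)
      (dtmk A B F (FNMod A B F Nd) x x t a)
      = dt2mk A B F (FNMod A B F Nd) x x (dlinN A B F Nd x t) a :=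
  btMapLeft_mk _ _ _ _ _ t a

set_option maxHeartbeats 4000000 in
set_option synthInstance.maxHeartbeats 1000000 in
theorem unit_surj
    (hlocflat : ∀ x y : X,
      LeftFlat B x (A.M x y) (fun (b : B.C x) (a : A.M x y) => A.mul (F.i x b) a))
    (hffx : LeftFaithfullyFlat B x (A.M x x)
        (fun (b : B.C x) (a : A.M x x) => A.mul (F.i x b) a))
    (t : FTc A B F Nd x x) (ht : t ∈ Gset A B F (FNDesc A B F Nd) x) :
    ∃ n : Nd.N x, etaLin A B F Nd x n = t := by
  have ht' : FNsig A B F Nd x x t = dtmk A B F (FNMod A B F Nd) x x t (A.one x) := ht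
  have htK : t ∈ LinearMap.ker (dlinN A B F Nd x) := by
    rw [LinearMap.mem_ker, dlinN_apply, sub_eq_zero]
    exact ht'
  -- inclusion of ker d into N ⊗ A is injective by flatness
  have hisK : IsRModOver B x (↥(LinearMap.ker (dlinN A B F Nd x))) (rhoK A B F Nd x) :=
    isRM_restrict B (isRM_ftc A B F Nd x) _ (fun u hu b => Kd_stab A B F Nd x u hu b)
  have hiota_inj : Function.Injective (btMapLeft (rhoK A B F Nd x)
      (fun (t : FTc A B F Nd x x) (b : B.C x) => (FNMod A B F Nd).act t (F.i x b))
      (fun (b : B.C x) (a : A.M x x) => A.mul (F.i x b) a)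
      (LinearMap.ker (dlinN A B F Nd x)).subtype (fun u b => rfl)) :=
    hlocflat x x _ _ _ _ hisK (isRM_ftc A B F Nd x) _ (fun u b => rfl) Subtype.coe_injective
  have hcomp1 : ∀ w, btMapLeft (rhoK A B F Nd x)
      (fun (t : FTc A B F Nd x x) (b : B.C x) => (FNMod A B F Nd).act t (F.i x b))
      (fun (b : B.C x) (a : A.M x x) => A.mul (F.i x b) a)
      (LinearMap.ker (dlinN A B F Nd x)).subtype (fun u b => rfl)
      (btMapLeft (fun (n : Nd.N x) (b : B.C x) => Nd.ract n b) (rhoK A B F Nd x)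
        (fun (b : B.C x) (a : A.M x x) => A.mul (F.i x b) a)
        (etaK A B F Nd x) (etaK_equiv A B F Nd x) w)
      = btMapLeft (fun (n : Nd.N x) (b : B.C x) => Nd.ract n b)
          (fun (t : FTc A B F Nd x x) (b : B.C x) => (FNMod A B F Nd).act t (F.i x b))
          (fun (b : B.C x) (a : A.M x x) => A.mul (F.i x b) a)
          (etaLin A B F Nd x) (etaLin_equiv A B F Nd x) w := by
    intro w
    refine bt_eq ((btMapLeft (rhoK A B F Nd x)
        (fun (t : FTc A B F Nd x x) (b : B.C x) => (FNMod A B F Nd).act t (F.i x b))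
        (fun (b : B.C x) (a : A.M x x) => A.mul (F.i x b) a)
        (LinearMap.ker (dlinN A B F Nd x)).subtype (fun u b => rfl)).comp
      (btMapLeft (fun (n : Nd.N x) (b : B.C x) => Nd.ract n b) (rhoK A B F Nd x)
        (fun (b : B.C x) (a : A.M x x) => A.mul (F.i x b) a)
        (etaK A B F Nd x) (etaK_equiv A B F Nd x)))
      (btMapLeft (fun (n : Nd.N x) (b : B.C x) => Nd.ract n b)
        (fun (t : FTc A B F Nd x x) (b : B.C x) => (FNMod A B F Nd).act t (F.i x b))
        (fun (b : B.C x) (a : A.M x x) => A.mul (F.i x b) a)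
        (etaLin A B F Nd x) (etaLin_equiv A B F Nd x)) ?_ w
    intro n c
    rw [LinearMap.comp_apply, btMapLeft_mk, btMapLeft_mk (rhoK A B F Nd x) (fun (t : FTc A B F Nd x x) (b : B.C x) => (FNMod A B F Nd).act t (F.i x b))
      (fun (b : B.C x) (a : A.M x x) => A.mul (F.i x b) a) (LinearMap.ker (dlinN A B F Nd x)).subtype (fun u b => rfl),
      btMapLeft_mk (fun (n : Nd.N x) (b : B.C x) => Nd.ract n b) (fun (t : FTc A B F Nd x x) (b : B.C x) => (FNMod A B F Nd).act t (F.i x b))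
      (fun (b : B.C x) (a : A.M x x) => A.mul (F.i x b) a) (etaLin A B F Nd x) (etaLin_equiv A B F Nd x)]
    rfl
  have key1 : ∀ (u : ↥(LinearMap.ker (dlinN A B F Nd x))) (a : A.M x x),
      btmk k (rhoK A B F Nd x) (fun (b : B.C x) (a : A.M x x) => A.mul (F.i x b) a) u a
        = btMapLeft (fun (n : Nd.N x) (b : B.C x) => Nd.ract n b) (rhoK A B F Nd x)
            (fun (b : B.C x) (a : A.M x x) => A.mul (F.i x b) a)
            (etaK A B F Nd x) (etaK_equiv A B F Nd x)
            (h1map A B F Nd x (dtmk A B F (FNMod A B F Nd) x x u.1 a)) := by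
    intro u a
    apply hiota_inj
    rw [btMapLeft_mk (rhoK A B F Nd x) (fun (t : FTc A B F Nd x x) (b : B.C x) => (FNMod A B F Nd).act t (F.i x b))
      (fun (b : B.C x) (a : A.M x x) => A.mul (F.i x b) a) (LinearMap.ker (dlinN A B F Nd x)).subtype (fun u b => rfl),
      hcomp1, ← FNsig_eq_eta]
    have hv := homotopy A B F Nd x (dtmk A B F (FNMod A B F Nd) x x u.1 a)
    rw [Dlt_mk A B F Nd x u.1 a] at hv
    have hu0 : dlinN A B F Nd x u.1 = 0 := u.2
    rw [hu0] at hv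
    simp only [map_zero, LinearMap.zero_apply, sub_zero] at hv
    exact hv
  have hpicomp : ∀ w, btMapLeft (rhoK A B F Nd x) (rhoH A B F Nd x)
      (fun (b : B.C x) (a : A.M x x) => A.mul (F.i x b) a)
      (RcN A B F Nd x).mkQ (rhoK_equiv A B F Nd x)
      (btMapLeft (fun (n : Nd.N x) (b : B.C x) => Nd.ract n b) (rhoK A B F Nd x)
        (fun (b : B.C x) (a : A.M x x) => A.mul (F.i x b) a)
        (etaK A B F Nd x) (etaK_equiv A B F Nd x) w) = 0 := by
    intro w
    refine bt_eq ((btMapLeft (rhoK A B F Nd x) (rhoH A B F Nd x)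
        (fun (b : B.C x) (a : A.M x x) => A.mul (F.i x b) a)
        (RcN A B F Nd x).mkQ (rhoK_equiv A B F Nd x)).comp
      (btMapLeft (fun (n : Nd.N x) (b : B.C x) => Nd.ract n b) (rhoK A B F Nd x)
        (fun (b : B.C x) (a : A.M x x) => A.mul (F.i x b) a)
        (etaK A B F Nd x) (etaK_equiv A B F Nd x))) 0 ?_ w
    intro n c
    rw [LinearMap.comp_apply, btMapLeft_mk, btMapLeft_mk, LinearMap.zero_apply]
    have hz : (RcN A B F Nd x).mkQ (etaK A B F Nd x n) = 0 := by
      rw [Submodule.mkQ_apply, Submodule.Quotient.mk_eq_zero]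
      exact Submodule.mem_comap.mpr ⟨n, rfl⟩
    rw [hz]
    have hz2 : (btmk k (rhoH A B F Nd x)
        (fun (b : B.C x) (a : A.M x x) => A.mul (F.i x b) a))
        (0 : ↥(LinearMap.ker (dlinN A B F Nd x)) ⧸ RcN A B F Nd x) = 0 :=
      map_zero _
    rw [hz2, LinearMap.zero_apply]
  have hisH : IsRModOver B x (↥(LinearMap.ker (dlinN A B F Nd x)) ⧸ RcN A B F Nd x)
      (rhoH A B F Nd x) :=
    isRM_quot B hisK (rKlin A B F Nd x) (fun b m => rfl) _ (Rc_stab A B F Nd x)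
  have hallH : ∀ s : BT k (rhoH A B F Nd x)
      (fun (b : B.C x) (a : A.M x x) => A.mul (F.i x b) a), s = 0 := by
    apply bt_zero_of_gen
    intro h a
    obtain ⟨u, rfl⟩ := Submodule.Quotient.mk_surjective _ h
    rw [← Submodule.mkQ_apply,
      ← btMapLeft_mk (rhoK A B F Nd x) (rhoH A B F Nd x)
        (fun (b : B.C x) (a : A.M x x) => A.mul (F.i x b) a)
        (RcN A B F Nd x).mkQ (rhoK_equiv A B F Nd x) u a,
      key1 u a]
    exact hpicomp _
  have hall := hffx.2 _ (rhoH A B F Nd x) hisH hallH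
  have h0 : (RcN A B F Nd x).mkQ ⟨t, htK⟩ = 0 := hall _
  rw [Submodule.mkQ_apply, Submodule.Quotient.mk_eq_zero] at h0
  obtain ⟨nn, hnn⟩ := Submodule.mem_comap.mp h0
  exact ⟨nn, hnn⟩

theorem unit_inj (hN : IsDMod Nd)
    (hlocflat : ∀ x y : X,
      LeftFlat B x (A.M x y) (fun (b : B.C x) (a : A.M x y) => A.mul (F.i x b) a))
    (hffx : LeftFaithfullyFlat B x (A.M x x)
        (fun (b : B.C x) (a : A.M x x) => A.mul (F.i x b) a))
    (n n' : Nd.N x) (h : etaLin A B F Nd x n = etaLin A B F Nd x n') : n = n' := by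
  have h0 : etaLin A B F Nd x (n - n') = 0 := by
    rw [map_sub, sub_eq_zero]; exact h
  rw [← sub_eq_zero]
  set n0 := n - n' with hn0def
  have h0' : ftmk A B F Nd x x n0 (A.one x) = 0 := h0
  set Np := Submodule.span k (Set.range (fun b => Nd.ract n0 b)) with hNp
  have hract0 : ∀ b : B.C x, Nd.ract 0 b = 0 := by
    intro b
    have := hN.smul_ract (0 : k) 0 b
    simpa using this
  have hstab : ∀ m (_ : m ∈ Np) (b : B.C x), Nd.ract m b ∈ Np := by
    intro m hm b
    induction hm using Submodule.span_induction with
    | mem y hy =>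
        obtain ⟨b', rfl⟩ := hy
        exact Submodule.subset_span ⟨B.mul b' b, (hN.ract_assoc n0 b' b).symm⟩
    | zero => rw [hract0]; exact Np.zero_mem
    | add p q hp hq hp' hq' => rw [hN.add_ract]; exact Np.add_mem hp' hq'
    | smul c p hp hp' => rw [hN.smul_ract]; exact Np.smul_mem c hp'
  have hmem0 : n0 ∈ Np := Submodule.subset_span ⟨B.one x, hN.ract_one n0⟩
  have hgen0 : ∀ m (_ : m ∈ Np) (a : A.M x x), ftmk A B F Nd x x m a = 0 := by
    intro m hm
    induction hm using Submodule.span_induction with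
    | mem y hy =>
        obtain ⟨b', rfl⟩ := hy
        intro a
        rw [btmk_rel k (fun (n : Nd.N x) (b : B.C x) => Nd.ract n b)
          (fun (b : B.C x) (a : A.M x x) => A.mul (F.i x b) a) n0 b' a]
        have h2 : ftmk A B F Nd x x n0 (A.mul (F.i x b') a)
            = ftRmul A B F Nd (A.mul (F.i x b') a) (ftmk A B F Nd x x n0 (A.one x)) := by
          rw [ftRmul_mk, A.one_mul]
        rw [h2, h0', map_zero]
    | zero => intro a; simp
    | add p q hp hq hp' hq' =>
        intro a
        rw [map_add, LinearMap.add_apply, hp' a, hq' a, add_zero]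
    | smul c p hp hp' =>
        intro a
        rw [map_smul, LinearMap.smul_apply, hp' a, smul_zero]
  have hisNp : IsRModOver B x ↥Np
      (fun m b => (⟨Nd.ract m.1 b, hstab m.1 m.2 b⟩ : ↥Np)) :=
    isRM_restrict B (isRM_dmod B Nd hN x) Np hstab
  have hj_inj : Function.Injective (btMapLeft
      (fun (m : ↥Np) (b : B.C x) => (⟨Nd.ract m.1 b, hstab m.1 m.2 b⟩ : ↥Np))
      (fun (n : Nd.N x) (b : B.C x) => Nd.ract n b)
      (fun (b : B.C x) (a : A.M x x) => A.mul (F.i x b) a)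
      Np.subtype (fun m b => rfl)) :=
    hlocflat x x _ _ _ _ hisNp (isRM_dmod B Nd hN x) Np.subtype (fun m b => rfl)
      Subtype.coe_injective
  have hz : ∀ s : BT k (fun (m : ↥Np) (b : B.C x) => (⟨Nd.ract m.1 b, hstab m.1 m.2 b⟩ : ↥Np))
      (fun (b : B.C x) (a : A.M x x) => A.mul (F.i x b) a), s = 0 := by
    apply bt_zero_of_gen
    intro m a
    apply hj_inj
    rw [btMapLeft_mk (fun (m : ↥Np) (b : B.C x) => (⟨Nd.ract m.1 b, hstab m.1 m.2 b⟩ : ↥Np))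
      (fun (n : Nd.N x) (b : B.C x) => Nd.ract n b) (fun (b : B.C x) (a : A.M x x) => A.mul (F.i x b) a)
      Np.subtype (fun m b => rfl), map_zero]
    exact hgen0 m.1 m.2 a
  have hall := hffx.2 ↥Np _ hisNp hz
  have : (⟨n0, hmem0⟩ : ↥Np) = 0 := hall _
  exact congrArg Subtype.val this

end Unit2

/-- Theorem 2.5, faithfully flat descent: if `A` is locally flat as a
left `B`-module, then each `A_{xx}` is faithfully flat as a left `B_x`-module if and only
if the adjoint pair `(F, G)` is a pair of inverse equivalences between `D_k(X)_B` and
`Desc_B(A)` (i.e. all units and all counits are bijective). -/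
theorem stmt3 {k X : Type} [CommRing k] (A : KCat k X) (B : DiagAlg k X) (F : XFun B A)
    (hlocflat : ∀ x y : X,
      LeftFlat B x (A.M x y) (fun (b : B.C x) (a : A.M x y) => A.mul (F.i x b) a)) :
    (∀ x : X, LeftFaithfullyFlat B x (A.M x x)
        (fun (b : B.C x) (a : A.M x x) => A.mul (F.i x b) a))
    ↔
    ((∀ (D : DescData A B F) (hD : IsDesc A B F D) (x y : X),
        Function.Bijective (epsMap A B F D hD x y)) ∧
      (∀ (Nd : DModData B), IsDMod Nd → ∀ x : X,
        Function.Bijective (fun n : Nd.N x =>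
          (⟨etaMap A B F Nd x n, rfl⟩ : {t // t ∈ Gset A B F (FNDesc A B F Nd) x})))) := by
  constructor
  · -- faithfully flat ⇒ equivalence
    intro hff
    constructor
    · intro D hD x y
      exact counit_bij A B F D hD hlocflat x y
    · intro Nd hN x
      constructor
      · intro n n' h
        have hval : etaLin A B F Nd x n = etaLin A B F Nd x n' := congrArg Subtype.val h
        exact unit_inj A B F Nd x hN hlocflat (hff x) n n' hval
      · rintro ⟨t, ht⟩
        obtain ⟨n, hn⟩ := unit_surj A B F Nd x hlocflat (hff x) t ht
        exact ⟨n, Subtype.ext hn⟩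
  · -- equivalence ⇒ faithfully flat
    intro hFG x
    refine ⟨hlocflat x x, ?_⟩
    intro N _ _ ρ hρ hz n
    obtain ⟨hr1, hr2, hr3, hr4, hr5, hr6⟩ := hρ
    -- the diagonal module family supported at x
    set Nd : DModData B :=
      { N := fun x' => PLift (x' = x) → N
        ract := fun {x'} f b => fun h => ρ (f h) (h.down ▸ b) } with hNddef
    have hNd : IsDMod Nd := by
      refine ⟨?_, ?_, ?_, ?_, ?_, ?_⟩
      · intro x' f f' b
        funext h; obtain ⟨he⟩ := h; subst he
        exact hr1 (f ⟨rfl⟩) (f' ⟨rfl⟩) b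
      · intro x' f b b'
        funext h; obtain ⟨he⟩ := h; subst he
        exact hr2 (f ⟨rfl⟩) b b'
      · intro x' c f b
        funext h; obtain ⟨he⟩ := h; subst he
        exact hr3 c (f ⟨rfl⟩) b
      · intro x' c f b
        funext h; obtain ⟨he⟩ := h; subst he
        exact hr4 c (f ⟨rfl⟩) b
      · intro x' f b b'
        funext h; obtain ⟨he⟩ := h; subst he
        exact hr5 (f ⟨rfl⟩) b b'
      · intro x' f
        funext h; obtain ⟨he⟩ := h; subst he
        exact hr6 (f ⟨rfl⟩)
    -- the constant-functions map N → Nd.N x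
    have g'add : ∀ m m' : N, (fun (_ : PLift (x = x)) => m + m')
        = (fun _ => m) + (fun _ => m') := fun m m' => rfl
    set g'lin : N →ₗ[k] Nd.N x :=
      { toFun := fun m => fun _ => m
        map_add' := fun m m' => rfl
        map_smul' := fun c m => rfl } with hg'def
    have hg' : ∀ (m : N) (b : B.C x), g'lin (ρ m b) = Nd.ract (g'lin m) b := by
      intro m b
      funext h; obtain ⟨he⟩ := h
      rfl
    -- every element of N_x ⊗ A_{xx} is zero
    have hall0 : ∀ s : FTc A B F Nd x x, s = 0 := by
      apply bt_zero_of_gen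
      intro f a
      have h1 : g'lin (f ⟨rfl⟩) = f := by
        funext h'; obtain ⟨he⟩ := h'
        rfl
      have h2 := btMapLeft_mk ρ (fun (nn : Nd.N x) (b : B.C x) => Nd.ract nn b)
        (fun (b : B.C x) (a : A.M x x) => A.mul (F.i x b) a) g'lin hg' (f ⟨rfl⟩) a
      rw [h1] at h2
      rw [← h2, hz (btmk k ρ _ (f ⟨rfl⟩) a), map_zero]
    -- injectivity of the unit forces N = 0
    have hinj := (hFG.2 Nd hNd x).1
    have himg : (⟨etaMap A B F Nd x (fun _ => n), rfl⟩
          : {t // t ∈ Gset A B F (FNDesc A B F Nd) x})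
        = ⟨etaMap A B F Nd x 0, rfl⟩ := by
      apply Subtype.ext
      show etaMap A B F Nd x (fun _ => n) = etaMap A B F Nd x 0
      rw [hall0 (etaMap A B F Nd x (fun _ => n)), hall0 (etaMap A B F Nd x 0)]
    have := hinj himg
    exact congrFun this ⟨rfl⟩

end Paper
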